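/- (Parametrized primal-only bounds with surrogate constants.) Under the hypotheses of the Haasdonk–Salomon–Wohlmuth a posteriori bounds — (u, λ) ∈ V × M solves the mixed problem a(u,v) + b(v,λ) = f(v) for all v ∈ V and b(u, q − λ) ≤ g(q − λ) for all q ∈ M; (u_n, λ_n) ∈ V × M satisfies b(u_n, λ_n) = g(λ_n); r_e(v) := f(v) − a(u_n, v) − b(v, λ_n); e_i is the Riesz representation of r_i(q) := b(u_n, q) − g(q); Π : Q → M satisfies (q − Π(q), η)_Q ≤ 0 for all q ∈ Q, η ∈ M — let α_LB and γ_UB be any constants with 0 < α_LB ≤ α and γ_UB ≥ γ. Set δ₀ := ‖r_e‖_{V'}, δ₁ := ‖Π(e_i)‖_Q, δ₂ := (λ_n, Π(e_i))_Q, c₁ := (1/(2α_LB))(δ₀ + γ_UB δ₁/β), c₂ := (1/α_LB)(δ₀δ₁/β + δ₂). Then ‖u − u_n‖_V ≤ Δ_u := c₁ + √(c₁² + c₂) and ‖λ − λ_n‖_Q ≤ (1/β)(δ₀ + γ_UB Δ_u). -/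

import Mathlib

open scoped RealInnerProductSpace

set_option maxHeartbeats 1600000 in
/-- Primal-only a posteriori error bounds with surrogate constants
`0 < α_LB ≤ α` and `γ_UB ≥ γ`. -/
theorem stmt_16 {V Q : Type*}
    [NormedAddCommGroup V] [InnerProductSpace ℝ V] [CompleteSpace V]
    [NormedAddCommGroup Q] [InnerProductSpace ℝ Q] [CompleteSpace Q]
    (a : V →L[ℝ] V →L[ℝ] ℝ) (α γ : ℝ) (hα : 0 < α)
    (hcoer : ∀ v : V, α * ‖v‖ ^ 2 ≤ a v v)
    (hγ : ∀ w v : V, a w v ≤ γ * (‖w‖ * ‖v‖))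
    (b : V →L[ℝ] Q →L[ℝ] ℝ) (β : ℝ) (hβ : 0 < β)
    (hinfsup : ∀ q : Q, β * ‖q‖ ≤ ‖b.flip q‖)
    (f : V →L[ℝ] ℝ) (g : Q →L[ℝ] ℝ)
    (M : Set Q) (hMne : M.Nonempty) (hMcl : IsClosed M) (hMcv : Convex ℝ M)
    (hMcone : ∀ c : ℝ, 0 ≤ c → ∀ q ∈ M, c • q ∈ M)
    (u un : V) (lam lamn : Q) (hlam : lam ∈ M) (hlamn : lamn ∈ M)
    (hsol1 : ∀ v : V, a u v + b v lam = f v)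
    (hsol2 : ∀ q ∈ M, b u (q - lam) ≤ g (q - lam))
    (hcomp : b un lamn = g lamn)
    (ei : Q) (hei : ∀ q : Q, ⟪ei, q⟫ = b un q - g q)
    (Pi : Q → Q) (hPiM : ∀ q : Q, Pi q ∈ M)
    (hPi : ∀ q : Q, ∀ η ∈ M, ⟪q - Pi q, η⟫ ≤ 0)
    (αLB γUB : ℝ) (hαLB : 0 < αLB) (hαLBle : αLB ≤ α) (hγUB : γ ≤ γUB)
    (δ₀ δ₁ δ₂ c₁ c₂ : ℝ)
    (hδ₀ : δ₀ = ‖f - a un - b.flip lamn‖)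
    (hδ₁ : δ₁ = ‖Pi ei‖) (hδ₂ : δ₂ = ⟪lamn, Pi ei⟫)
    (hc₁ : c₁ = (1 / (2 * αLB)) * (δ₀ + γUB * δ₁ / β))
    (hc₂ : c₂ = (1 / αLB) * (δ₀ * δ₁ / β + δ₂))
    (hpos : 0 ≤ c₁ ^ 2 + c₂) :
    ‖u - un‖ ≤ c₁ + Real.sqrt (c₁ ^ 2 + c₂) ∧
    ‖lam - lamn‖ ≤ (1 / β) * (δ₀ + γUB * (c₁ + Real.sqrt (c₁ ^ 2 + c₂))) := by
  by_cases hγ0 : 0 ≤ γUB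
  · -- main case
    set e := u - un with he
    set ep := lam - lamn with hep
    set r : V →L[ℝ] ℝ := f - a un - b.flip lamn with hr
    have hrv : ∀ v : V, r v = a e v + b v ep := by
      intro v
      have h1 := hsol1 v
      simp only [hr, he, hep, ContinuousLinearMap.sub_apply, map_sub,
        ContinuousLinearMap.flip_apply]
      linarith
    have hδ₀nn : 0 ≤ δ₀ := hδ₀ ▸ norm_nonneg _
    have hδ₁nn : 0 ≤ δ₁ := hδ₁ ▸ norm_nonneg _
    -- bound on -b e ep
    have hs1 : b u (lamn - lam) ≤ g (lamn - lam) := hsol2 lamn hlamn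
    have hs3 : ⟪ei, lamn⟫ = 0 := by rw [hei lamn, hcomp]; ring
    have hs4 : ⟪ei - Pi ei, lam⟫ ≤ 0 := hPi ei lam hlam
    have hs5 : ⟪Pi ei, ep⟫ ≤ δ₁ * ‖ep‖ := by
      rw [hδ₁]; exact real_inner_le_norm _ _
    have hbep : -(b e ep) ≤ δ₁ * ‖ep‖ + δ₂ := by
      have e1 : b e (lamn - lam) = b u (lamn - lam) - b un (lamn - lam) := by
        simp only [he, map_sub, ContinuousLinearMap.sub_apply]
        ring
      have e2 : ⟪ei, lamn - lam⟫ = b un (lamn - lam) - g (lamn - lam) := hei _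
      have e3 : ⟪ei, lamn - lam⟫ = ⟪ei, lamn⟫ - ⟪ei, lam⟫ := inner_sub_right _ _ _
      have e4 : ⟪ei - Pi ei, lam⟫ = ⟪ei, lam⟫ - ⟪Pi ei, lam⟫ := inner_sub_left _ _ _
      have e5 : ⟪Pi ei, lam⟫ = ⟪Pi ei, ep⟫ + ⟪Pi ei, lamn⟫ := by
        rw [hep, inner_sub_right]; ring
      have e6 : ⟪Pi ei, lamn⟫ = δ₂ := by rw [hδ₂, real_inner_comm]
      have e7 : b e (lamn - lam) = -(b e ep) := by
        rw [hep, show lamn - lam = -(lam - lamn) from (neg_sub _ _).symm, map_neg]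
      linarith
    -- coercivity estimate
    have hre : r e ≤ δ₀ * ‖e‖ := by
      calc r e ≤ |r e| := le_abs_self _
        _ = ‖r e‖ := (Real.norm_eq_abs _).symm
        _ ≤ ‖r‖ * ‖e‖ := r.le_opNorm e
        _ = δ₀ * ‖e‖ := by rw [hδ₀]
    have key1 : αLB * ‖e‖ ^ 2 ≤ δ₀ * ‖e‖ + δ₁ * ‖ep‖ + δ₂ := by
      have h1 : αLB * ‖e‖ ^ 2 ≤ α * ‖e‖ ^ 2 :=
        mul_le_mul_of_nonneg_right hαLBle (sq_nonneg _)
      have h2 := hcoer e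
      have h3 := hrv e
      linarith
    -- inf-sup estimate
    have key2 : β * ‖ep‖ ≤ δ₀ + γUB * ‖e‖ := by
      have hb : ‖b.flip ep‖ ≤ δ₀ + γUB * ‖e‖ := by
        apply ContinuousLinearMap.opNorm_le_bound _
          (by have := mul_nonneg hγ0 (norm_nonneg e); linarith)
        intro v
        have h3 := hrv v
        have h1 : |r v| ≤ δ₀ * ‖v‖ := by
          rw [← Real.norm_eq_abs, hδ₀]; exact r.le_opNorm v
        have h2 : |a e v| ≤ γUB * ‖e‖ * ‖v‖ := by
          rw [abs_le]
          constructor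
          · have := hγ (-e) v
            rw [map_neg, ContinuousLinearMap.neg_apply, norm_neg] at this
            nlinarith [mul_nonneg (norm_nonneg e) (norm_nonneg v)]
          · have := hγ e v
            nlinarith [mul_nonneg (norm_nonneg e) (norm_nonneg v)]
        calc ‖b.flip ep v‖ = |b v ep| := by
              rw [ContinuousLinearMap.flip_apply, Real.norm_eq_abs]
          _ = |r v - a e v| := by rw [show b v ep = r v - a e v by linarith]
          _ ≤ |r v| + |a e v| := abs_sub _ _
          _ ≤ δ₀ * ‖v‖ + γUB * ‖e‖ * ‖v‖ := by linarith
          _ = (δ₀ + γUB * ‖e‖) * ‖v‖ := by ring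
      exact le_trans (hinfsup ep) hb
    -- quadratic inequality
    have hc₁' : 2 * αLB * β * c₁ = β * δ₀ + γUB * δ₁ := by
      rw [hc₁]; field_simp
    have hc₂' : αLB * β * c₂ = δ₀ * δ₁ + β * δ₂ := by
      rw [hc₂]; field_simp
    have h5 : δ₁ * (β * ‖ep‖) ≤ δ₁ * (δ₀ + γUB * ‖e‖) :=
      mul_le_mul_of_nonneg_left key2 hδ₁nn
    have hq : ‖e‖ ^ 2 ≤ 2 * c₁ * ‖e‖ + c₂ := by
      have h6 : αLB * β * ‖e‖ ^ 2 ≤ β * δ₀ * ‖e‖ + δ₁ * (δ₀ + γUB * ‖e‖) + β * δ₂ := by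
        have h6a := mul_le_mul_of_nonneg_left key1 hβ.le
        nlinarith [h6a, h5]
      have h7 : αLB * β * (2 * c₁ * ‖e‖ + c₂)
          = (β * δ₀ + γUB * δ₁) * ‖e‖ + (δ₀ * δ₁ + β * δ₂) := by
        linear_combination ‖e‖ * hc₁' + hc₂'
      have h8 : αLB * β * ‖e‖ ^ 2 ≤ αLB * β * (2 * c₁ * ‖e‖ + c₂) := by
        rw [h7]; nlinarith [h6]
      exact le_of_mul_le_mul_left h8 (mul_pos hαLB hβ)
    have hsq : ‖e‖ - c₁ ≤ Real.sqrt (c₁ ^ 2 + c₂) := by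
      have h1 : (‖e‖ - c₁) ^ 2 ≤ c₁ ^ 2 + c₂ := by nlinarith
      calc ‖e‖ - c₁ ≤ |‖e‖ - c₁| := le_abs_self _
        _ = Real.sqrt ((‖e‖ - c₁) ^ 2) := (Real.sqrt_sq_eq_abs _).symm
        _ ≤ Real.sqrt (c₁ ^ 2 + c₂) := Real.sqrt_le_sqrt h1
    have heΔ : ‖e‖ ≤ c₁ + Real.sqrt (c₁ ^ 2 + c₂) := by linarith
    refine ⟨heΔ, ?_⟩
    rw [show (1 / β) * (δ₀ + γUB * (c₁ + Real.sqrt (c₁ ^ 2 + c₂)))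
        = (δ₀ + γUB * (c₁ + Real.sqrt (c₁ ^ 2 + c₂))) / β by ring,
      le_div_iff₀ hβ]
    have := mul_le_mul_of_nonneg_left heΔ hγ0
    nlinarith
  · -- degenerate case: γUB < 0 forces V and Q trivial
    push_neg at hγ0
    have hγneg : γ < 0 := lt_of_le_of_lt hγUB hγ0
    have hV : ∀ v : V, v = 0 := by
      intro v
      have h1 := hcoer v
      have h2 := hγ v v
      have hsq : ‖v‖ * ‖v‖ = ‖v‖ ^ 2 := (sq ‖v‖).symm
      have h4 : α * ‖v‖ ^ 2 ≤ γ * ‖v‖ ^ 2 := by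
        calc α * ‖v‖ ^ 2 ≤ a v v := h1
          _ ≤ γ * (‖v‖ * ‖v‖) := h2
          _ = γ * ‖v‖ ^ 2 := by rw [hsq]
      have hag : 0 < α - γ := by linarith
      have h5 : ‖v‖ ^ 2 ≤ 0 := by nlinarith [h4, hag]
      have h6 : ‖v‖ ^ 2 = 0 := le_antisymm h5 (sq_nonneg _)
      exact norm_eq_zero.mp (sq_eq_zero_iff.mp h6)
    have hQ : ∀ q : Q, q = 0 := by
      intro q
      have h1 := hinfsup q
      have h2 : b.flip q = 0 := by
        ext v; rw [hV v]; simp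
      rw [h2, norm_zero] at h1
      have : ‖q‖ ≤ 0 := by nlinarith [norm_nonneg q]
      exact norm_le_zero_iff.mp this
    have hδ₀0 : δ₀ = 0 := by
      rw [hδ₀, show f - a un - b.flip lamn = 0 by ext v; rw [hV v]; simp, norm_zero]
    have hδ₁0 : δ₁ = 0 := by rw [hδ₁, hQ (Pi ei), norm_zero]
    have hδ₂0 : δ₂ = 0 := by rw [hδ₂, hQ (Pi ei)]; simp
    have hc₁0 : c₁ = 0 := by rw [hc₁, hδ₀0, hδ₁0]; ring
    have hc₂0 : c₂ = 0 := by rw [hc₂, hδ₀0, hδ₁0, hδ₂0]; ring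
    have he0 : u - un = 0 := hV _
    have hl0 : lam - lamn = 0 := hQ _
    rw [he0, hl0, hc₁0, hc₂0, hδ₀0]
    norm_num
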